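/- arXiv:1901.02756 — 2 statements merged into one kernel-verified Lean document; each statement's English description precedes it below -/
import Mathlib

section
/- Let θ̂ : ℝ → ℝ be a continuously differentiable function satisfying θ̂'(t) = -dz(θ̂(t)) + u(t) where |u(t)| ≤ K for all t ≥ 0, and suppose c > 2K/ε₀. Then θ̂ is bounded: for all t ≥ 0, |θ̂(t)| ≤ max(|θ̂(0)|, a₀ + ε₀). -/
noncomputable def dz (c a ε : ℝ) (s : ℝ) : ℝ :=
  if |s| ≤ a then 0
  else if |s| < a + ε then c * ((|s| - a)^2 / (2 * ε)) * Real.sign s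
  else c * s - c * (a + ε / 2) * Real.sign s

lemma dz_large (c a ε s : ℝ) (ha : 0 ≤ a) (hε : 0 < ε) (hs : a + ε ≤ s) :
    dz c a ε s = c * s - c * (a + ε / 2) := by
  have hs0 : 0 < s := lt_of_lt_of_le (by linarith) hs
  have habs : |s| = s := abs_of_pos hs0
  unfold dz
  rw [habs, Real.sign_of_pos hs0]
  rw [if_neg (by linarith), if_neg (by linarith)]
  ring

lemma dz_odd (c a ε s : ℝ) : dz c a ε (-s) = -dz c a ε s := by
  unfold dz
  rw [abs_neg, Real.sign_neg]
  by_cases h1 : |s| ≤ a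
  · simp [h1]
  · rw [if_neg h1, if_neg h1]
    by_cases h2 : |s| < a + ε
    · rw [if_pos h2, if_pos h2]; ring
    · rw [if_neg h2, if_neg h2]; ring

lemma aux_bound (c a ε K M : ℝ) (hc : 0 < c) (ha : 0 ≤ a) (hε : 0 < ε)
    (hK : 0 ≤ K) (hcK : 2 * K / ε < c)
    (f u : ℝ → ℝ) (huK : ∀ t ≥ (0:ℝ), |u t| ≤ K)
    (hode : ∀ t ≥ (0:ℝ), HasDerivAt f (-(dz c a ε (f t)) + u t) t)
    (hM : a + ε ≤ M) (h0 : f 0 ≤ M) : ∀ t ≥ (0:ℝ), f t ≤ M := by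
  have hKc : K < c * ε / 2 := by
    rw [div_lt_iff₀ hε] at hcK; nlinarith
  by_contra hcon
  push_neg at hcon
  obtain ⟨t₁, ht₁0, ht₁⟩ := hcon
  have ht₁pos : 0 < t₁ := by
    rcases lt_or_eq_of_le ht₁0 with h | h
    · exact h
    · exfalso; rw [← h] at ht₁; linarith
  have hcontOn : ContinuousOn f (Set.Icc 0 t₁) := fun t ht =>
    ((hode t ht.1).continuousAt).continuousWithinAt
  set A : Set ℝ := {t ∈ Set.Icc (0:ℝ) t₁ | f t ≤ M} with hA
  have hAne : A.Nonempty := ⟨0, ⟨le_refl 0, le_of_lt ht₁pos⟩, h0⟩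
  have hAclosed : IsClosed A := by
    have : A = Set.Icc 0 t₁ ∩ f ⁻¹' Set.Iic M := by
      ext x; simp [hA, Set.mem_sep_iff, and_comm]
    rw [this]
    exact (hcontOn.preimage_isClosed_of_isClosed isClosed_Icc isClosed_Iic)
  have hAcompact : IsCompact A := (isCompact_Icc).of_isClosed_subset hAclosed
    (fun x hx => hx.1)
  have hTmem : sSup A ∈ A := hAcompact.sSup_mem hAne
  set T := sSup A with hT
  have hT0 : 0 ≤ T := hTmem.1.1
  have hTM : f T ≤ M := hTmem.2
  have hTt₁ : T < t₁ := lt_of_le_of_ne hTmem.1.2 (fun h => by rw [h] at hTM; linarith)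
  have hgt : ∀ t ∈ Set.Ioo T t₁, M < f t := by
    intro t ht
    by_contra h
    push_neg at h
    have : t ∈ A := ⟨⟨le_trans hT0 ht.1.le, ht.2.le⟩, h⟩
    exact absurd (le_csSup hAcompact.bddAbove this) (not_le.mpr ht.1)
  have hderiv : ∀ t ∈ Set.Ioo T t₁, deriv f t < 0 := by
    intro t ht
    have ht0 : (0:ℝ) ≤ t := le_trans hT0 ht.1.le
    have hft : a + ε ≤ f t := le_trans hM (hgt t ht).le
    have := (hode t ht0).deriv
    rw [this, dz_large c a ε (f t) ha hε hft]
    have hu := huK t ht0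
    have : u t ≤ K := (abs_le.mp hu).2
    nlinarith [hgt t ht]
  have hanti : StrictAntiOn f (Set.Icc T t₁) := by
    apply strictAntiOn_of_deriv_neg (convex_Icc T t₁)
    · exact fun t ht => ((hode t (le_trans hT0 ht.1)).continuousAt).continuousWithinAt
    · intro t ht
      rw [interior_Icc] at ht
      exact hderiv t ht
  have := hanti (Set.left_mem_Icc.mpr hTt₁.le) (Set.right_mem_Icc.mpr hTt₁.le) hTt₁
  linarith

theorem stmt_7 (c a ε K : ℝ) (hc : 0 < c) (ha : 0 ≤ a) (hε : 0 < ε)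
    (hK : 0 ≤ K) (hcK : 2 * K / ε < c)
    (θhat u : ℝ → ℝ) (hu : Continuous u) (huK : ∀ t ≥ (0:ℝ), |u t| ≤ K)
    (hode : ∀ t ≥ (0:ℝ), HasDerivAt θhat (-(dz c a ε (θhat t)) + u t) t) :
    ∀ t ≥ (0:ℝ), |θhat t| ≤ max (|θhat 0|) (a + ε) := by
  set M := max (|θhat 0|) (a + ε) with hMdef
  have hM : a + ε ≤ M := le_max_right _ _
  intro t ht
  rw [abs_le]
  constructor
  · have hode' : ∀ s ≥ (0:ℝ), HasDerivAt (fun x => -θhat x)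
        (-(dz c a ε (-θhat s)) + (-u s)) s := by
      intro s hs
      have := (hode s hs).neg
      have h2 : -(dz c a ε (-θhat s)) + (-u s) = -(-dz c a ε (θhat s) + u s) := by
        rw [dz_odd]; ring
      rw [h2]; exact this
    have := aux_bound c a ε K M hc ha hε hK hcK (fun x => -θhat x) (fun x => -u x)
      (fun s hs => by simpa using huK s hs) hode' hM
      (by show -θhat 0 ≤ M; have := neg_abs_le (θhat 0); linarith [le_max_left (|θhat 0|) (a + ε)])
      t ht
    have this : -θhat t ≤ M := this; linarith
  · exact aux_bound c a ε K M hc ha hε hK hcK θhat u huK hode hM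
      (le_trans (le_abs_self _) (le_max_left _ _)) t ht
end

section
/- Suppose x : [0,∞) → ℝⁿ solves x' = f(x) with f locally Lipschitz, the forward orbit is bounded, and V : ℝⁿ → ℝ is C¹ with ∇V(x)·f(x) ≤ 0 everywhere. Then the ω-limit set of x is nonempty, compact, invariant, and contained in the set {x : ∇V(x)·f(x) = 0}. -/
open RealInnerProductSpace

open Set Filter Metric in
lemma locallyLipschitz_lipschitzOnWith {E F : Type*} [MetricSpace E] [MetricSpace F]
    {f : E → F} (hf : LocallyLipschitz f) {K : Set E} (hK : IsCompact K) :
    ∃ L : NNReal, LipschitzOnWith L f K := by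
  rcases K.eq_empty_or_nonempty with rfl | hne
  · exact ⟨0, by simp⟩
  have hloc : ∀ p : E, ∃ (L : NNReal) (r : ℝ), 0 < r ∧ LipschitzOnWith L f (ball p (2 * r)) := by
    intro p
    obtain ⟨L, t, ht, hL⟩ := hf p
    obtain ⟨ε, hε, hball⟩ := Metric.mem_nhds_iff.1 ht
    refine ⟨L, ε / 2, by linarith, hL.mono ?_⟩
    have : (2 : ℝ) * (ε / 2) = ε := by ring
    rw [this]; exact hball
  choose L r hr hLip using hloc
  obtain ⟨t, -, hcov⟩ := hK.elim_nhds_subcover (fun p => ball p (r p))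
    (fun p _ => ball_mem_nhds p (hr p))
  have htne : t.Nonempty := by
    obtain ⟨z, hz⟩ := hne
    obtain ⟨p, hp, -⟩ := Set.mem_iUnion₂.1 (hcov hz)
    exact ⟨p, hp⟩
  set δ : ℝ := t.inf' htne r with hδdef
  have hδ : 0 < δ := by
    rw [hδdef, Finset.lt_inf'_iff]
    exact fun p _ => hr p
  set L0 : NNReal := t.sup L with hL0def
  obtain ⟨D, hD⟩ := Metric.isBounded_iff.1 (hK.image hf.continuous).isBounded
  set D' : ℝ := max D 0 with hD'def
  have hD'0 : 0 ≤ D' := le_max_right _ _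
  refine ⟨L0 + Real.toNNReal (D' / δ), lipschitzOnWith_iff_dist_le_mul.2 ?_⟩
  intro a ha b hb
  have hLcoe : ((L0 + Real.toNNReal (D' / δ) : NNReal) : ℝ) = (L0 : ℝ) + D' / δ := by
    push_cast
    rw [Real.coe_toNNReal _ (div_nonneg hD'0 hδ.le)]
  rw [hLcoe]
  rcases lt_or_ge (dist a b) δ with hcase | hcase
  · obtain ⟨p, hp, hap⟩ := Set.mem_iUnion₂.1 (hcov ha)
    have hrp : δ ≤ r p := Finset.inf'_le r hp
    have hbp : b ∈ ball p (2 * r p) := by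
      rw [mem_ball] at hap ⊢
      have := dist_triangle b a p
      rw [dist_comm b a] at this
      linarith
    have hap2 : a ∈ ball p (2 * r p) := by
      rw [mem_ball] at hap ⊢
      have := hr p
      linarith
    have hle := (hLip p).dist_le_mul a hap2 b hbp
    have hLp : (L p : ℝ) ≤ (L0 : ℝ) := by exact_mod_cast Finset.le_sup hp
    calc dist (f a) (f b) ≤ (L p : ℝ) * dist a b := hle
      _ ≤ ((L0 : ℝ) + D' / δ) * dist a b := by
          apply mul_le_mul_of_nonneg_right _ dist_nonneg
          have : 0 ≤ D' / δ := div_nonneg hD'0 hδ.le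
          linarith
  · have h1 : dist (f a) (f b) ≤ D' :=
      le_trans (hD (Set.mem_image_of_mem f ha) (Set.mem_image_of_mem f hb)) (le_max_left _ _)
    calc dist (f a) (f b) ≤ D' := h1
      _ = D' / δ * δ := by field_simp
      _ ≤ D' / δ * dist a b := by
          apply mul_le_mul_of_nonneg_left hcase (div_nonneg hD'0 hδ.le)
      _ ≤ ((L0 : ℝ) + D' / δ) * dist a b := by
          apply mul_le_mul_of_nonneg_right _ dist_nonneg
          have : (0:ℝ) ≤ (L0 : ℝ) := L0.coe_nonneg
          linarith

open Set Filter Metric in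
lemma gronwall_cmp {E : Type*} [NormedAddCommGroup E] [NormedSpace ℝ E]
    {g : E → E} {S : Set E} {Lc : NNReal} (hLc : LipschitzOnWith Lc g S)
    {F G : ℝ → E} {T : ℝ} (hT : 0 ≤ T)
    (hF : ∀ s ∈ Icc (0:ℝ) T, HasDerivAt F (g (F s)) s) (hFs : ∀ s ∈ Icc (0:ℝ) T, F s ∈ S)
    (hG : ∀ s ∈ Icc (0:ℝ) T, HasDerivAt G (g (G s)) s) (hGs : ∀ s ∈ Icc (0:ℝ) T, G s ∈ S) :
    dist (F T) (G T) ≤ dist (F 0) (G 0) * Real.exp (Lc * T) := by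
  have h := dist_le_of_trajectories_ODE_of_mem (v := fun _ => g) (s := fun _ => S)
    (K := Lc) (fun _ _ => hLc)
    (fun s hs => (hF s hs).continuousAt.continuousWithinAt)
    (fun s hs => (hF s ⟨hs.1, hs.2.le⟩).hasDerivWithinAt)
    (fun s hs => hFs s ⟨hs.1, hs.2.le⟩)
    (fun s hs => (hG s hs).continuousAt.continuousWithinAt)
    (fun s hs => (hG s ⟨hs.1, hs.2.le⟩).hasDerivWithinAt)
    (fun s hs => hGs s ⟨hs.1, hs.2.le⟩)
    le_rfl T ⟨hT, le_rfl⟩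
  simpa using h

open Set Filter Metric

/-- LaSalle's invariance principle: for `x' = f(x)` with locally Lipschitz `f`,
bounded forward orbit, and a `C¹` function `V` with `⟪∇V, f⟫ ≤ 0`, the ω-limit set
of the trajectory is nonempty, compact, invariant, and contained in
`{y | ⟪∇V(y), f(y)⟫ = 0}`. -/
theorem stmt_18 (n : ℕ) (f : EuclideanSpace ℝ (Fin n) → EuclideanSpace ℝ (Fin n))
    (hf : LocallyLipschitz f)
    (x : ℝ → EuclideanSpace ℝ (Fin n))
    (hx : ∀ t ≥ (0:ℝ), HasDerivAt x (f (x t)) t)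
    (hbdd : ∃ C : ℝ, ∀ t ≥ (0:ℝ), ‖x t‖ ≤ C)
    (V : EuclideanSpace ℝ (Fin n) → ℝ) (hV : ContDiff ℝ 1 V)
    (hVdec : ∀ y, ⟪gradient V y, f y⟫ ≤ 0) :
    let Ω : Set (EuclideanSpace ℝ (Fin n)) :=
      {y | ∃ u : ℕ → ℝ, Filter.Tendsto u Filter.atTop Filter.atTop ∧
        Filter.Tendsto (fun k => x (u k)) Filter.atTop (nhds y)}
    Ω.Nonempty ∧ IsCompact Ω ∧
      (∀ y ∈ Ω, ∀ φ : ℝ → EuclideanSpace ℝ (Fin n), φ 0 = y →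
        (∀ t : ℝ, HasDerivAt φ (f (φ t)) t) → ∀ t : ℝ, φ t ∈ Ω) ∧
      Ω ⊆ {y | ⟪gradient V y, f y⟫ = 0} := by
  intro Ω
  obtain ⟨C0, hC0⟩ := hbdd
  set C : ℝ := max C0 0 with hCdef
  have hC : 0 ≤ C := le_max_right _ _
  set K : Set (EuclideanSpace ℝ (Fin n)) := closedBall 0 C with hKdef
  have hKcomp : IsCompact K := isCompact_closedBall 0 C
  have hmemK : ∀ t ≥ (0:ℝ), x t ∈ K := by
    intro t ht
    simp only [hKdef, mem_closedBall, dist_zero_right]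
    exact le_trans (hC0 t ht) (le_max_left _ _)
  -- nonempty
  have hnonempty : Ω.Nonempty := by
    obtain ⟨a, -, ψ, hψ, hlim⟩ := hKcomp.tendsto_subseq
      (x := fun k : ℕ => x (k : ℝ)) (fun k => hmemK _ (Nat.cast_nonneg k))
    exact ⟨a, fun k => ((ψ k : ℕ) : ℝ),
      tendsto_natCast_atTop_atTop.comp hψ.tendsto_atTop, hlim⟩
  -- Ω ⊆ K
  have hΩK : Ω ⊆ K := by
    rintro y ⟨u, hu, hul⟩
    have hev : ∀ᶠ k in atTop, x (u k) ∈ K :=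
      (hu.eventually_ge_atTop 0).mono (fun k hk => hmemK _ hk)
    exact hKcomp.isClosed.mem_of_tendsto hul hev
  -- closed
  have hclosed : IsClosed Ω := by
    refine IsSeqClosed.isClosed ?_
    intro ys y hys hlim
    have hex : ∀ m : ℕ, ∃ T : ℝ, (m : ℝ) ≤ T ∧ dist (x T) (ys m) < 1 / (m + 1) := by
      intro m
      obtain ⟨u, hu, hul⟩ := hys m
      have h1 : ∀ᶠ k in atTop, (m : ℝ) ≤ u k := hu.eventually_ge_atTop _
      have h2 : ∀ᶠ k in atTop, dist (x (u k)) (ys m) < 1 / (m + 1) :=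
        (tendsto_iff_dist_tendsto_zero.1 hul).eventually_lt_const (by positivity)
      obtain ⟨k, hk1, hk2⟩ := (h1.and h2).exists
      exact ⟨u k, hk1, hk2⟩
    choose T hT1 hT2 using hex
    refine ⟨T, tendsto_atTop_mono hT1 tendsto_natCast_atTop_atTop, ?_⟩
    rw [tendsto_iff_dist_tendsto_zero]
    refine squeeze_zero (fun m => dist_nonneg)
      (fun m => (dist_triangle (x (T m)) (ys m) y).trans
        (add_le_add_left (hT2 m).le _)) ?_
    have hz := tendsto_one_div_add_atTop_nhds_zero_nat.add
      (tendsto_iff_dist_tendsto_zero.1 hlim)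
    simpa using hz
  have hcompact : IsCompact Ω := hKcomp.of_isClosed_subset hclosed hΩK
  -- derivative of V along trajectory
  have hVdiff : Differentiable ℝ V := hV.differentiable one_ne_zero
  have hVderiv : ∀ t : ℝ, 0 ≤ t →
      HasDerivAt (fun s => V (x s)) ⟪gradient V (x t), f (x t)⟫ t := by
    intro t ht
    have hg : HasFDerivAt V ((InnerProductSpace.toDual ℝ _) (gradient V (x t))) (x t) :=
      hasGradientAt_iff_hasFDerivAt.1 (hVdiff (x t)).hasGradientAt
    have hc := hg.comp_hasDerivAt t (hx t ht)
    simpa [Function.comp_def, InnerProductSpace.toDual_apply_apply] using hc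
  have hVxcont : ContinuousOn (fun s => V (x s)) (Ici 0) :=
    fun s hs => ((hVderiv s hs).continuousAt).continuousWithinAt
  have hanti : AntitoneOn (fun s => V (x s)) (Ici 0) := by
    apply antitoneOn_of_deriv_nonpos (convex_Ici 0) hVxcont
    · intro s hs
      rw [interior_Ici] at hs
      exact (hVderiv s (le_of_lt hs)).differentiableAt.differentiableWithinAt
    · intro s hs
      rw [interior_Ici] at hs
      rw [(hVderiv s (le_of_lt hs)).deriv]
      exact hVdec _
  set w : ℝ → ℝ := fun t => V (x (max t 0)) with hwdef
  have hwanti : Antitone w := by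
    intro s t hst
    exact hanti (Set.mem_Ici.2 (le_max_right s 0)) (Set.mem_Ici.2 (le_max_right t 0))
      (max_le_max hst le_rfl)
  have hKne : K.Nonempty := ⟨0, by simp [hKdef, hC]⟩
  obtain ⟨z, hz, hzmin⟩ := hKcomp.exists_isMinOn hKne hV.continuous.continuousOn
  have hwbdd : BddBelow (Set.range w) := by
    refine ⟨V z, ?_⟩
    rintro _ ⟨t, rfl⟩
    exact hzmin (hmemK _ (le_max_right t 0))
  set c : ℝ := ⨅ t, w t with hcdef
  have hwlim : Tendsto w atTop (nhds c) := tendsto_atTop_ciInf hwanti hwbdd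
  have hVxlim : Tendsto (fun t => V (x t)) atTop (nhds c) := by
    refine hwlim.congr' ?_
    filter_upwards [eventually_ge_atTop (0:ℝ)] with t ht
    simp [hwdef, max_eq_left ht]
  -- Part 4
  have hΩzero : Ω ⊆ {y | ⟪gradient V y, f y⟫ = 0} := by
    rintro y ⟨u, hu, hul⟩
    by_contra hne
    have hylt : ⟪gradient V y, f y⟫ < 0 := lt_of_le_of_ne (hVdec y) hne
    set ε : ℝ := -⟪gradient V y, f y⟫ with hεdef
    have hε : 0 < ε := by simp only [hεdef]; linarith
    have hgcont : Continuous fun z => ⟪gradient V z, f z⟫ := by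
      have h1 : Continuous fun z => gradient V z := by
        have heq : (fun z => gradient V z) =
            fun z => (InnerProductSpace.toDual ℝ _).symm (fderiv ℝ V z) := rfl
        rw [heq]
        exact (InnerProductSpace.toDual ℝ _).symm.continuous.comp (hV.continuous_fderiv one_ne_zero)
      exact h1.inner hf.continuous
    obtain ⟨δ, hδ, hδball⟩ : ∃ δ > 0, ∀ z, dist z y < δ → ⟪gradient V z, f z⟫ < -(ε/2) := by
      obtain ⟨δ, hδ, hδ2⟩ := Metric.continuousAt_iff.1 hgcont.continuousAt (ε/2) (by linarith)
      refine ⟨δ, hδ, fun z hz => ?_⟩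
      have h3 := hδ2 hz
      rw [Real.dist_eq] at h3
      have h4 := abs_lt.1 h3
      have h5 : ⟪gradient V y, f y⟫ = -ε := by simp [hεdef]
      have h6 := h4.2
      rw [h5] at h6
      linarith
    obtain ⟨M0, hM0⟩ := hKcomp.exists_bound_of_continuousOn hf.continuous.continuousOn
    set M : ℝ := max M0 1 with hMdef
    have hM : 0 < M := lt_of_lt_of_le one_pos (le_max_right _ _)
    have hMb : ∀ z ∈ K, ‖f z‖ ≤ M := fun z hz => (hM0 z hz).trans (le_max_left _ _)
    set τ : ℝ := δ / (2 * M) with hτdef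
    have hτ : 0 < τ := by positivity
    have hev : ∀ᶠ k in atTop, V (x (u k + τ)) ≤ V (x (u k)) - ε/2 * τ := by
      filter_upwards [hu.eventually_ge_atTop 0,
        (tendsto_iff_dist_tendsto_zero.1 hul).eventually_lt_const
          (by linarith : (0:ℝ) < δ/2)] with k hk0 hk1
      -- trajectory stays in ball y δ on [u k, u k + τ]
      have hball : ∀ s ∈ Icc (u k) (u k + τ), dist (x s) y < δ := by
        intro s hs
        have hd : ∀ s' ∈ Icc (u k) (u k + τ),
            HasDerivWithinAt x (f (x s')) (Icc (u k) (u k + τ)) s' :=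
          fun s' hs' => (hx s' (le_trans hk0 hs'.1)).hasDerivWithinAt
        have hb : ∀ s' ∈ Icc (u k) (u k + τ), ‖f (x s')‖ ≤ M :=
          fun s' hs' => hMb _ (hmemK s' (le_trans hk0 hs'.1))
        have hnorm := (convex_Icc (u k) (u k + τ)).norm_image_sub_le_of_norm_hasDerivWithin_le
          hd hb (Set.left_mem_Icc.2 (by linarith)) hs
        have hsn : ‖s - u k‖ ≤ τ := by
          rw [Real.norm_eq_abs, abs_of_nonneg (by linarith [hs.1])]
          linarith [hs.2]
        have hMτ : M * τ = δ / 2 := by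
          rw [hτdef]; field_simp
        have h7 : dist (x s) (x (u k)) ≤ δ / 2 := by
          rw [dist_eq_norm]
          calc ‖x s - x (u k)‖ ≤ M * ‖s - u k‖ := hnorm
            _ ≤ M * τ := by nlinarith
            _ = δ / 2 := hMτ
        calc dist (x s) y ≤ dist (x s) (x (u k)) + dist (x (u k)) y := dist_triangle _ _ _
          _ < δ / 2 + δ / 2 := by linarith
          _ = δ := by ring
      -- V decreases at rate ε/2 on this interval
      have hanti2 : AntitoneOn (fun s => V (x s) + ε/2 * s) (Icc (u k) (u k + τ)) := by
        have hder : ∀ s ∈ Icc (u k) (u k + τ),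
            HasDerivAt (fun s' => V (x s') + ε/2 * s')
              (⟪gradient V (x s), f (x s)⟫ + ε/2) s := by
          intro s hs
          have h8 : HasDerivAt (fun s' : ℝ => ε/2 * s') (ε/2) s := by
            simpa using (hasDerivAt_id s).const_mul (ε/2)
          exact (hVderiv s (le_trans hk0 hs.1)).add h8
        apply antitoneOn_of_deriv_nonpos (convex_Icc _ _)
        · exact fun s hs => (hder s hs).continuousAt.continuousWithinAt
        · intro s hs
          rw [interior_Icc] at hs
          exact (hder s ⟨hs.1.le, hs.2.le⟩).differentiableAt.differentiableWithinAt
        · intro s hs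
          rw [interior_Icc] at hs
          rw [(hder s ⟨hs.1.le, hs.2.le⟩).deriv]
          have h9 := hδball _ (hball s ⟨hs.1.le, hs.2.le⟩)
          linarith
      have h10 := hanti2 (Set.left_mem_Icc.2 (by linarith))
        (Set.right_mem_Icc.2 (by linarith)) (by linarith)
      simp only at h10
      linarith
    have l1 : Tendsto (fun k => V (x (u k))) atTop (nhds c) := hVxlim.comp hu
    have l2 : Tendsto (fun k => V (x (u k + τ))) atTop (nhds c) :=
      hVxlim.comp (tendsto_atTop_add_const_right _ τ hu)
    have hle : c ≤ c - ε/2 * τ :=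
      le_of_tendsto_of_tendsto l2 (l1.sub_const (ε/2 * τ)) hev
    have hpos : 0 < ε/2 * τ := by positivity
    linarith
  -- Part 3 : invariance
  have hinv : ∀ y ∈ Ω, ∀ φ : ℝ → EuclideanSpace ℝ (Fin n), φ 0 = y →
      (∀ t : ℝ, HasDerivAt φ (f (φ t)) t) → ∀ t : ℝ, φ t ∈ Ω := by
    rintro y ⟨u, hu, hul⟩ φ hφ0 hφ' t
    have hφcont : Continuous φ := continuous_iff_continuousAt.2 fun s => (hφ' s).continuousAt
    set S : Set (EuclideanSpace ℝ (Fin n)) := K ∪ (φ '' Icc (min t 0) (max t 0)) with hSdef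
    have hScomp : IsCompact S := hKcomp.union (isCompact_Icc.image hφcont)
    obtain ⟨Lc, hLc⟩ := locallyLipschitz_lipschitzOnWith hf hScomp
    rcases le_or_gt 0 t with ht | ht
    · -- forward in time
      have key : ∀ k : ℕ, 0 ≤ u k →
          dist (x (u k + t)) (φ t) ≤ dist (x (u k)) y * Real.exp (Lc * t) := by
        intro k hk
        have hF : ∀ s ∈ Icc (0:ℝ) t,
            HasDerivAt (fun s' => x (u k + s')) (f (x (u k + s))) s := by
          intro s hs
          have h1 : HasDerivAt (fun s' : ℝ => u k + s') 1 s := (hasDerivAt_id s).const_add (u k)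
          have h2 := HasDerivAt.scomp s (hx (u k + s) (by linarith [hs.1])) h1
          simpa [Function.comp_def] using h2
        have hgr := gronwall_cmp hLc ht hF
          (fun s hs => Or.inl (hmemK _ (by linarith [hs.1])))
          (fun s _ => hφ' s)
          (fun s hs => Or.inr ⟨s, ⟨le_trans (min_le_right t 0) hs.1,
            le_trans hs.2 (le_max_left t 0)⟩, rfl⟩)
        simpa [hφ0] using hgr
      refine ⟨fun k => u k + t, tendsto_atTop_add_const_right _ t hu, ?_⟩
      rw [tendsto_iff_dist_tendsto_zero]
      refine squeeze_zero' (g := fun k => dist (x (u k)) y * Real.exp (Lc * t))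
        (Eventually.of_forall fun k => dist_nonneg) ?_ ?_
      · filter_upwards [hu.eventually_ge_atTop 0] with k hk
        exact key k hk
      · have hm := (tendsto_iff_dist_tendsto_zero.1 hul).mul_const (Real.exp (Lc * t))
        simpa using hm
    · -- backward in time
      have key : ∀ k : ℕ, -t ≤ u k →
          dist (x (u k + t)) (φ t) ≤ dist (x (u k)) y * Real.exp (Lc * (-t)) := by
        intro k hk
        have hF : ∀ s ∈ Icc (0:ℝ) (-t),
            HasDerivAt (fun s' => x (u k - s')) (-(f (x (u k - s)))) s := by
          intro s hs
          have h1 : HasDerivAt (fun s' : ℝ => u k - s') (-1) s := by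
            simpa using (hasDerivAt_id s).const_sub (u k)
          have h2 := HasDerivAt.scomp s (hx (u k - s) (by linarith [hs.2])) h1
          simpa [Function.comp_def] using h2
        have hG : ∀ s ∈ Icc (0:ℝ) (-t),
            HasDerivAt (fun s' => φ (-s')) (-(f (φ (-s)))) s := by
          intro s _
          have h1 : HasDerivAt (fun s' : ℝ => -s') (-1) s := by
            simpa [Pi.neg_def] using (hasDerivAt_id' s).neg
          have h2 := HasDerivAt.scomp s (hφ' (-s)) h1
          simpa [Function.comp_def] using h2
        have hgr := gronwall_cmp (g := fun z => -(f z)) hLc.neg (by linarith : (0:ℝ) ≤ -t)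
          hF (fun s hs => Or.inl (hmemK _ (by linarith [hs.2])))
          hG (fun s hs => Or.inr ⟨-s, ⟨le_trans (min_le_left t 0) (by linarith [hs.2]),
            le_trans (by linarith [hs.1]) (le_max_right t 0)⟩, rfl⟩)
        have he0 : x (u k - 0) = x (u k) := by norm_num
        have he1 : φ (-(0:ℝ)) = y := by rw [neg_zero, hφ0]
        have he2 : x (u k - -t) = x (u k + t) := by rw [sub_neg_eq_add]
        have he3 : φ (- -t) = φ t := by rw [neg_neg]
        rw [he2, he3, he0, he1] at hgr
        exact hgr
      refine ⟨fun k => u k + t, tendsto_atTop_add_const_right _ t hu, ?_⟩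
      rw [tendsto_iff_dist_tendsto_zero]
      refine squeeze_zero' (g := fun k => dist (x (u k)) y * Real.exp (Lc * (-t)))
        (Eventually.of_forall fun k => dist_nonneg) ?_ ?_
      · filter_upwards [hu.eventually_ge_atTop (-t)] with k hk
        exact key k hk
      · have hm := (tendsto_iff_dist_tendsto_zero.1 hul).mul_const (Real.exp (Lc * (-t)))
        simpa using hm
  exact ⟨hnonempty, hcompact, hinv, hΩzero⟩
end
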